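/- Let Y be a finite abelian group and let μ̂_1,…,μ̂_n (n ≥ 2) be nonnegative-valued characteristic functions on Y satisfying Π_{i=1}^n μ̂_i(Σ_{j=1}^n β_{ij} u_j) = Π_{i,j} μ̂_i(β_{ij} u_j) for all u_j ∈ Y, with β_{ij} ∈ Aut(Y), β_{1j} = β_{i1} = Id. Then either F_{μ_i} = {0} for all i, or F_{μ_i} ≠ {0} for all i and there exists a nonzero subgroup H of Y with H ⊆ ∩_{i=1}^n F_{μ_i} and β_{ij}(H) = H for all i,j. -/

import Mathlib

/-- A probability distribution on a finite set, given by its mass function. -/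
def IsDist {X : Type*} [Fintype X] (μ : X → ℝ) : Prop :=
  (∀ x, 0 ≤ μ x) ∧ ∑ x, μ x = 1

/-- The characteristic function `μ̂(y) = ∑_x (x,y) μ({x})` of a distribution `μ`
on a finite abelian group `X`, where `y` is a character of `X`. -/
noncomputable def charFun {X : Type*} [AddCommGroup X] [Fintype X]
    (μ : X → ℝ) (y : AddChar X ℂ) : ℂ :=
  ∑ x, (μ x : ℂ) * y x

/-- The Haar (uniform) distribution `m_K` on a subgroup `K` of `X`. -/
noncomputable def haarDist {X : Type*} [AddCommGroup X] [Fintype X]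
    (K : AddSubgroup X) : X → ℝ :=
  (K : Set X).indicator fun _ => ((Nat.card K : ℝ))⁻¹

/-- The degenerate distribution `E_{x₀}` concentrated at `x₀`. -/
def diracDist {X : Type*} [DecidableEq X] (x₀ : X) : X → ℝ :=
  fun x => if x = x₀ then 1 else 0

/-- Convolution of two distributions on a finite abelian group. -/
noncomputable def convDist {X : Type*} [AddCommGroup X] [Fintype X]
    (μ ν : X → ℝ) : X → ℝ :=
  fun x => ∑ t, μ t * ν (x - t)

/-- `μ` is an idempotent distribution: a shift of the Haar distribution on a subgroup. -/
noncomputable def IsIdempotent {X : Type*} [AddCommGroup X] [Fintype X] [DecidableEq X]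
    (μ : X → ℝ) : Prop :=
  ∃ (K : AddSubgroup X) (x₀ : X), μ = convDist (haarDist K) (diracDist x₀)

/-- The linear forms `L_j = ∑_i A i j (ξ i)`, `j = 1,…,k`, of independent random
variables `ξ i` with distributions `μ i` are independent: the joint distribution of
`(L_1, …, L_k)` equals the product of the marginal distributions. -/
def FormsIndep {X : Type*} [AddCommGroup X] [Fintype X] [DecidableEq X] {n k : ℕ}
    (μ : Fin n → X → ℝ) (A : Fin n → Fin k → X → X) : Prop :=
  ∀ x : Fin k → X,
    (∑ t : Fin n → X, if (∀ j, ∑ i, A i j (t i) = x j) then ∏ i, μ i (t i) else 0) =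
    ∏ j, ∑ t : Fin n → X, if (∑ i, A i j (t i) = x j) then ∏ i, μ i (t i) else 0

/-- The adjoint `α̃` of an endomorphism `α` of `X`, acting on the character group:
`(α x, y) = (x, α̃ y)`. -/
noncomputable def adjChar {X : Type*} [AddCommGroup X] (α : X →+ X)
    (y : AddChar X ℂ) : AddChar X ℂ :=
  y.compAddMonoidHom α

open scoped ComplexOrder

namespace Stmt7Aux

variable {X : Type*} [AddCommGroup X] [Fintype X]

lemma addChar_pow_card (y : AddChar X ℂ) (x : X) : y x ^ Fintype.card X = 1 := by
  rw [← AddChar.map_nsmul_eq_pow, card_nsmul_eq_zero, AddChar.map_zero_eq_one]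

lemma addChar_abs (y : AddChar X ℂ) (x : X) : ‖y x‖ = 1 := by
  have h := congrArg (‖·‖) (addChar_pow_card y x)
  simp only [norm_pow, norm_one] at h
  have hc : Fintype.card X ≠ 0 := Fintype.card_ne_zero
  rcases lt_trichotomy (‖y x‖) 1 with hlt | heq | hgt
  · exact absurd h (by simpa using (pow_lt_one₀ (norm_nonneg _) hlt hc).ne)
  · exact heq
  · exact absurd h (by simpa using (one_lt_pow₀ hgt hc).ne')

lemma finite_addChar : Finite (AddChar X ℂ) := by
  classical
  have hN : 0 < Fintype.card X := Fintype.card_pos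
  have hinj : Function.Injective
      (fun (y : AddChar X ℂ) => (fun x =>
        (⟨y x, (Polynomial.mem_nthRootsFinset hN (1 : ℂ)).mpr (addChar_pow_card y x)⟩ :
          (Polynomial.nthRootsFinset (Fintype.card X) (1 : ℂ)))) : _ → X → _) := by
    intro y z h
    exact DFunLike.ext _ _ fun x => congrArg Subtype.val (congrFun h x)
  exact Finite.of_injective _ hinj

variable {μ : X → ℝ}

lemma charFun_apply_one (hμ : IsDist μ) : charFun μ (1 : AddChar X ℂ) = 1 := by
  unfold charFun
  simp only [AddChar.one_apply, mul_one]
  rw [← Complex.ofReal_sum, hμ.2, Complex.ofReal_one]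

lemma abs_charFun_le (hμ : IsDist μ) (y : AddChar X ℂ) : ‖charFun μ y‖ ≤ 1 := by
  unfold charFun
  calc ‖∑ x, (μ x : ℂ) * y x‖ ≤ ∑ x, ‖(μ x : ℂ) * y x‖ :=
        norm_sum_le _ _
    _ = ∑ x, μ x := by
        refine Finset.sum_congr rfl fun x _ => ?_
        rw [norm_mul, addChar_abs, mul_one, Complex.norm_real, Real.norm_eq_abs, abs_of_nonneg (hμ.1 x)]
    _ = 1 := hμ.2

lemma charFun_eq_one_iff (hμ : IsDist μ) (y : AddChar X ℂ) :
    charFun μ y = 1 ↔ ∀ x, μ x ≠ 0 → y x = 1 := by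
  constructor
  · intro h
    have hre : ∑ x, μ x * (y x).re = ∑ x, μ x := by
      have h1 := congrArg Complex.re h
      unfold charFun at h1
      rw [Complex.re_sum] at h1
      simp only [Complex.mul_re, Complex.ofReal_re, Complex.ofReal_im, zero_mul,
        sub_zero, Complex.one_re] at h1
      rw [h1, hμ.2]
    have hle : ∀ x ∈ Finset.univ, μ x * (y x).re ≤ μ x := by
      intro x _
      have h2 : (y x).re ≤ 1 := by
        calc (y x).re ≤ |(y x).re| := le_abs_self _
          _ ≤ ‖y x‖ := Complex.abs_re_le_norm _
          _ = 1 := addChar_abs y x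
      calc μ x * (y x).re ≤ μ x * 1 := mul_le_mul_of_nonneg_left h2 (hμ.1 x)
        _ = μ x := mul_one _
    have heach := (Finset.sum_eq_sum_iff_of_le hle).mp hre
    intro x hx
    have h3 : μ x * (y x).re = μ x := heach x (Finset.mem_univ x)
    have hre1 : (y x).re = 1 := by
      have := mul_right_cancel₀ hx (by linarith [h3] : (y x).re * μ x = 1 * μ x)
      linarith [this]
    have habs := addChar_abs y x
    have hsq : (y x).re ^ 2 + (y x).im ^ 2 = 1 := by
      have := congrArg (· ^ 2) habs
      simp only [Complex.sq_norm, Complex.normSq_apply, one_pow] at this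
      nlinarith [this]
    have him : (y x).im = 0 := by nlinarith [hsq, hre1]
    exact Complex.ext (by simpa using hre1) (by simpa using him)
  · intro h
    unfold charFun
    rw [show (1 : ℂ) = ((1 : ℝ) : ℂ) by norm_num, ← hμ.2, Complex.ofReal_sum]
    refine Finset.sum_congr rfl fun x _ => ?_
    by_cases hx : μ x = 0
    · simp [hx]
    · rw [h x hx, mul_one]

/-- Product of reals in `[0,1]` equal to one forces each factor to be one. -/
lemma rprod_eq_one {ι : Type*} {s : Finset ι} {r : ι → ℝ}
    (h0 : ∀ i ∈ s, 0 ≤ r i) (h1 : ∀ i ∈ s, r i ≤ 1)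
    (hp : ∏ i ∈ s, r i = 1) : ∀ k ∈ s, r k = 1 := by
  classical
  intro k hk
  have hP0 : 0 ≤ ∏ i ∈ s.erase k, r i :=
    Finset.prod_nonneg fun i hi => h0 i (Finset.mem_of_mem_erase hi)
  have hP1 : ∏ i ∈ s.erase k, r i ≤ 1 :=
    Finset.prod_le_one (fun i hi => h0 i (Finset.mem_of_mem_erase hi))
      (fun i hi => h1 i (Finset.mem_of_mem_erase hi))
  have hmul : r k * ∏ i ∈ s.erase k, r i = 1 := by
    rw [Finset.mul_prod_erase s r hk]; exact hp
  nlinarith [h0 k hk, h1 k hk]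

/-- Product of nonneg complex numbers of absolute value at most one equal to one
forces each factor to be one. -/
lemma cprod_eq_one {ι : Type*} {s : Finset ι} {g : ι → ℂ}
    (h0 : ∀ i ∈ s, 0 ≤ g i) (h1 : ∀ i ∈ s, ‖g i‖ ≤ 1)
    (hp : ∏ i ∈ s, g i = 1) : ∀ k ∈ s, g k = 1 := by
  have habs : ∀ k ∈ s, ‖g k‖ = 1 := by
    refine rprod_eq_one (fun i _ => norm_nonneg _) h1 ?_
    rw [← norm_prod, hp, norm_one]
  intro k hk
  obtain ⟨hre, him⟩ := Complex.nonneg_iff.mp (h0 k hk)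
  have h2 : g k = ((g k).re : ℂ) := by
    apply Complex.ext
    · simp
    · simp [← him]
  have h3 : ‖g k‖ = (g k).re := by
    conv_lhs => rw [h2]
    rw [Complex.norm_real, Real.norm_eq_abs, abs_of_nonneg hre]
  have h4 : (g k).re = 1 := by rw [← h3]; exact habs k hk
  rw [h2, h4, Complex.ofReal_one]

/-- Nonnegativity of products of nonnegative complex numbers. -/
lemma cprod_nonneg {ι : Type*} {s : Finset ι} {g : ι → ℂ}
    (h0 : ∀ i ∈ s, 0 ≤ g i) : 0 ≤ ∏ i ∈ s, g i := by
  classical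
  induction s using Finset.induction_on with
  | empty => simp
  | @insert a s' hx ih =>
    rw [Finset.prod_insert hx]
    exact mul_nonneg (h0 a (Finset.mem_insert_self a s'))
      (ih fun i hi => h0 i (Finset.mem_insert_of_mem hi))

/-- A subgroup with equal index to an oversubgroup equals it. -/
lemma subgroup_eq_of_le_of_index_eq {G : Type*} [Group G] {H K : Subgroup G} (h : H ≤ K)
    (hi : H.index = K.index) (h0 : K.index ≠ 0) : H = K := by
  have h1 := Subgroup.relIndex_mul_index h
  rw [hi] at h1
  have h2 : H.relIndex K = 1 :=
    Nat.eq_of_mul_eq_mul_right (Nat.pos_of_ne_zero h0) (by rw [h1, one_mul])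
  exact le_antisymm h (Subgroup.relIndex_eq_one.mp h2)

/-- The row-product homomorphism associated to a matrix of automorphisms. -/
def rowProd {Y : Type*} [CommGroup Y] (n : ℕ) (β : Fin n → Fin n → (Y ≃* Y)) :
    (Fin n → Y) →* (Fin n → Y) where
  toFun u i := ∏ j, β i j (u j)
  map_one' := by funext i; simp
  map_mul' u v := by
    funext i
    simp only [Pi.mul_apply, map_mul]
    rw [← Finset.prod_mul_distrib]

/-- Index of the comap of a subgroup under a `MulEquiv`. -/
lemma index_comap_equiv {G : Type*} [Group G] (e : G ≃* G) (H : Subgroup G) :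
    (H.comap e.toMonoidHom).index = H.index := by
  rw [Subgroup.index_comap, MonoidHom.range_eq_top_of_surjective _ e.surjective,
    Subgroup.relIndex_top_right]


/-- The subgroup of characters where the characteristic function equals one. -/
def charSubgroup (μ : X → ℝ) (hd : IsDist μ) : Subgroup (AddChar X ℂ) where
  carrier := {y | charFun μ y = 1}
  one_mem' := charFun_apply_one hd
  mul_mem' := by
    intro a b ha hb
    simp only [Set.mem_setOf_eq] at *
    rw [charFun_eq_one_iff hd] at ha hb ⊢
    intro x hx
    rw [AddChar.mul_apply, ha x hx, hb x hx, mul_one]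
  inv_mem' := by
    intro a ha
    simp only [Set.mem_setOf_eq] at *
    rw [charFun_eq_one_iff hd] at ha ⊢
    intro x hx
    rw [AddChar.inv_apply, AddChar.map_neg_eq_inv, ha x hx, inv_one]

lemma mem_charSubgroup {μ : X → ℝ} {hd : IsDist μ} {y : AddChar X ℂ} :
    y ∈ charSubgroup μ hd ↔ charFun μ y = 1 := Iff.rfl

end Stmt7Aux

open ComplexOrder in
/-- Corollary 1: for a finite abelian group `Y` (here the character
group of `X`) and nonnegative characteristic functions `μ̂_i` satisfying the functional
equation with `β_{1j} = β_{i1} = Id`: either all `F_{μ_i} = {0}`, or all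
`F_{μ_i} ≠ {0}` and there is a nonzero subgroup `H ⊆ ∩ F_{μ_i}` with `β_{ij}(H) = H`.
(`Y` is multiplicative, so `{0}` is the trivial subgroup `{1}`.) -/
theorem stmt7 {X : Type*} [AddCommGroup X] [Fintype X]
    (n : ℕ) (hn : 2 ≤ n)
    (μ : Fin n → X → ℝ) (hμ : ∀ i, IsDist (μ i))
    (hpos : ∀ i y, 0 ≤ charFun (μ i) y)
    (β : Fin n → Fin n → (AddChar X ℂ ≃* AddChar X ℂ))
    (hβ1 : ∀ j, β ⟨0, by omega⟩ j = MulEquiv.refl _)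
    (hβ2 : ∀ i, β i ⟨0, by omega⟩ = MulEquiv.refl _)
    (heq : ∀ u : Fin n → AddChar X ℂ,
      ∏ i, charFun (μ i) (∏ j, β i j (u j)) =
      ∏ i, ∏ j, charFun (μ i) (β i j (u j))) :
    (∀ i, {y : AddChar X ℂ | charFun (μ i) y = 1} = {1}) ∨
    ((∀ i, {y : AddChar X ℂ | charFun (μ i) y = 1} ≠ {1}) ∧
      ∃ H : Subgroup (AddChar X ℂ), H ≠ ⊥ ∧
        (H : Set (AddChar X ℂ)) ⊆ ⋂ i, {y | charFun (μ i) y = 1} ∧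
        ∀ i j, H.map (β i j).toMonoidHom = H) := by
  classical
  haveI : Finite (AddChar X ℂ) := Stmt7Aux.finite_addChar
  let F : Fin n → Subgroup (AddChar X ℂ) := fun i => Stmt7Aux.charSubgroup (μ i) (hμ i)
  have hFmem : ∀ i y, y ∈ F i ↔ charFun (μ i) y = 1 := fun i y => Iff.rfl
  have hFcoe : ∀ i, {y : AddChar X ℂ | charFun (μ i) y = 1} = (F i : Set _) := fun i => rfl
  let F' : Fin n → Subgroup (AddChar X ℂ) := fun j => ⨅ i, (F i).comap (β i j).toMonoidHom
  let B := Stmt7Aux.rowProd n β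
  have h1 : ∀ i y, ‖charFun (μ i) y‖ ≤ 1 := fun i y =>
    Stmt7Aux.abs_charFun_le (hμ i) y
  -- the key set-theoretic identity
  have hFSET : (Subgroup.pi Set.univ F).comap B = Subgroup.pi Set.univ F' := by
    ext u
    simp only [Subgroup.mem_comap, Subgroup.mem_pi, Set.mem_univ, forall_true_left]
    constructor
    · intro h
      have hLHS : ∏ i, charFun (μ i) (∏ j, β i j (u j)) = 1 :=
        Finset.prod_eq_one fun i _ => (hFmem i _).mp (h i)
      have hRHS := (heq u).symm.trans hLHS
      intro j
      have houter : ∀ i ∈ Finset.univ, ∏ j, charFun (μ i) (β i j (u j)) = 1 :=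
        Stmt7Aux.cprod_eq_one
          (fun i _ => Stmt7Aux.cprod_nonneg fun j _ => hpos i _)
          (fun i _ => by
            rw [norm_prod]
            exact Finset.prod_le_one (fun j _ => norm_nonneg _) fun j _ => h1 i _)
          hRHS
      refine Subgroup.mem_iInf.mpr fun i => Subgroup.mem_comap.mpr ?_
      exact (hFmem i _).mpr
        (Stmt7Aux.cprod_eq_one (fun j _ => hpos i _) (fun j _ => h1 i _)
          (houter i (Finset.mem_univ i)) j (Finset.mem_univ j))
    · intro h
      have hRHS : ∏ i, ∏ j, charFun (μ i) (β i j (u j)) = 1 :=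
        Finset.prod_eq_one fun i _ => Finset.prod_eq_one fun j _ =>
          (hFmem i _).mp (Subgroup.mem_comap.mp (Subgroup.mem_iInf.mp (h j) i))
      have hLHS := (heq u).trans hRHS
      intro i
      exact (hFmem i _).mpr
        (Stmt7Aux.cprod_eq_one (fun i _ => hpos i _) (fun i _ => h1 i _) hLHS i
          (Finset.mem_univ i))
  -- index bookkeeping
  have hindnz : ∀ (H : Subgroup (AddChar X ℂ)), H.index ≠ 0 := fun H =>
    Subgroup.index_ne_zero_of_finite
  have hdvd1 : ∀ i j, (F i).index ∣ (F' j).index := by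
    intro i j
    have hle : F' j ≤ (F i).comap (β i j).toMonoidHom := iInf_le _ i
    have h2 := Subgroup.index_dvd_of_le hle
    rwa [Stmt7Aux.index_comap_equiv] at h2
  have hdvd2 : ∏ j, (F' j).index ∣ ∏ i, (F i).index := by
    rw [← Subgroup.index_pi, ← Subgroup.index_pi, ← hFSET, Subgroup.index_comap]
    exact Subgroup.relIndex_dvd_index_of_normal (Subgroup.pi Set.univ F) B.range
  have hprodeq : ∏ j, (F' j).index = ∏ j, (F j).index :=
    Nat.dvd_antisymm hdvd2 (Finset.prod_dvd_prod_of_dvd _ _ fun j _ => hdvd1 j j)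
  have heach : ∀ j, (F' j).index = (F j).index := by
    intro j
    by_contra hne
    have hlt : (F j).index < (F' j).index :=
      lt_of_le_of_ne (Nat.le_of_dvd (Nat.pos_of_ne_zero (hindnz _)) (hdvd1 j j)) (Ne.symm hne)
    have h3 : ∏ j, (F j).index < ∏ j, (F' j).index :=
      Finset.prod_lt_prod (fun i _ => Nat.pos_of_ne_zero (hindnz _))
        (fun i _ => Nat.le_of_dvd (Nat.pos_of_ne_zero (hindnz _)) (hdvd1 i i))
        ⟨j, Finset.mem_univ j, hlt⟩
    omega
  have hall : ∀ i j, (F i).index = (F j).index := fun i j =>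
    Nat.dvd_antisymm (by rw [← heach j]; exact hdvd1 i j)
      (by rw [← heach i]; exact hdvd1 j i)
  have hcomapEq : ∀ i j, F' j = (F i).comap (β i j).toMonoidHom := by
    intro i j
    refine Stmt7Aux.subgroup_eq_of_le_of_index_eq (iInf_le _ i) ?_ ?_
    · rw [Stmt7Aux.index_comap_equiv, heach j, hall j i]
    · rw [Stmt7Aux.index_comap_equiv]; exact hindnz _
  -- all the subgroups coincide with F₀ and are invariant
  have hFeq : ∀ i, F i = F' ⟨0, by omega⟩ := by
    intro i
    rw [hcomapEq i ⟨0, by omega⟩, hβ2 i]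
    ext y
    simp [Subgroup.mem_comap]
  have hF'eq : ∀ j, F' j = F ⟨0, by omega⟩ := by
    intro j
    rw [hcomapEq ⟨0, by omega⟩ j, hβ1 j]
    ext y
    simp [Subgroup.mem_comap]
  have hF : ∀ i, F i = F ⟨0, by omega⟩ := fun i => (hFeq i).trans (hF'eq _)
  have hcomap0 : ∀ i j, (F ⟨0, by omega⟩).comap (β i j).toMonoidHom = F ⟨0, by omega⟩ := by
    intro i j
    rw [← hF i, ← hcomapEq i j, hF'eq j]
    exact (hF i).symm
  have hmap0 : ∀ i j, (F ⟨0, by omega⟩).map (β i j).toMonoidHom = F ⟨0, by omega⟩ := by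
    intro i j
    conv_lhs => rw [← hcomap0 i j]
    rw [Subgroup.map_comap_eq, MonoidHom.range_eq_top_of_surjective _ (β i j).surjective,
      top_inf_eq]
  by_cases hbot : F ⟨0, by omega⟩ = ⊥
  · left
    intro i
    rw [hFcoe i, hF i, hbot]
    exact Subgroup.coe_bot
  · right
    constructor
    · intro i hset
      apply hbot
      rw [← hF i]
      apply SetLike.coe_injective
      rw [Subgroup.coe_bot, ← hFcoe i]
      exact hset
    · refine ⟨F ⟨0, by omega⟩, hbot, ?_, hmap0⟩
      intro y hy
      refine Set.mem_iInter.mpr fun i => ?_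
      rw [Set.mem_setOf_eq, ← hFmem i y, hF i]
      exact hy
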